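/- For any two distinct values k ≠ m in Fin 10, the probability that the first card drawn has value k while the dealer's hole card does not have value m equals (count k) * (t − count m − 1) / (t * (t − 1)). -/

import Mathlib

open PMF ENNReal Equiv Finset

variable {α : Type*} [DecidableEq α] [Fintype α]

lemma fix_two_card (i0 i1 : α) (h01 : i0 ≠ i1) :
    (univ.filter (fun σ : Perm α => σ i0 = i0 ∧ σ i1 = i1)).card
      = (Fintype.card α - 2).factorial := by
  have e : Perm {x // ¬(x = i0 ∨ x = i1)} ≃
      {σ : Perm α // σ i0 = i0 ∧ σ i1 = i1} := by
    refine (Equiv.Perm.subtypeEquivSubtypePerm (fun x => ¬(x = i0 ∨ x = i1))).trans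
      (Equiv.subtypeEquiv (Equiv.refl _) ?_)
    intro σ
    simp only [Equiv.refl_apply]
    constructor
    · intro h
      exact ⟨h i0 (by simp), h i1 (by simp)⟩
    · rintro ⟨h0, h1⟩ x hx
      rcases not_not.mp hx with rfl | rfl
      · exact h0
      · exact h1
  have hc := Fintype.card_congr e
  rw [Fintype.card_perm] at hc
  have hcard : Fintype.card {x // ¬(x = i0 ∨ x = i1)} = Fintype.card α - 2 := by
    rw [Fintype.card_subtype_compl]
    congr 1
    rw [Fintype.card_subtype]
    have h2 : univ.filter (fun x => x = i0 ∨ x = i1) = {i0, i1} := by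
      ext x; simp
    rw [h2, card_insert_of_notMem (by simp [h01]), card_singleton]
  rw [hcard] at hc
  rw [hc, Fintype.card_subtype]

lemma two_point_card (i0 i1 a b : α) (h01 : i0 ≠ i1) (hab : a ≠ b) :
    (univ.filter (fun σ : Perm α => σ i0 = a ∧ σ i1 = b)).card
      = (Fintype.card α - 2).factorial := by
  classical
  set π1 : Perm α := Equiv.swap i0 a with hπ1
  set b' : α := π1⁻¹ b with hb'
  have hπ1i0 : π1 i0 = a := Equiv.swap_apply_left i0 a
  have hb'i0 : b' ≠ i0 := by
    intro h
    apply hab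
    have : π1 b' = b := by simp [hb']
    rw [h, hπ1i0] at this
    exact this
  set π : Perm α := π1 * Equiv.swap i1 b' with hπ
  have hπi0 : π i0 = a := by
    simp only [hπ, Perm.mul_apply]
    rw [Equiv.swap_apply_of_ne_of_ne h01 hb'i0.symm, hπ1i0]
  have hπi1 : π i1 = b := by
    simp only [hπ, Perm.mul_apply]
    rw [Equiv.swap_apply_left]
    simp [hb']
  rw [← fix_two_card i0 i1 h01]
  apply Finset.card_bij' (fun σ _ => π⁻¹ * σ) (fun τ _ => π * τ)
  · intro σ hσ
    simp only [mem_filter, mem_univ, true_and] at hσ ⊢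
    simp [Perm.mul_apply, hσ.1, hσ.2, ← hπi0, ← hπi1]
  · intro τ hτ
    simp only [mem_filter, mem_univ, true_and] at hτ ⊢
    simp [Perm.mul_apply, hτ.1, hτ.2, hπi0, hπi1]
  · intro σ _; simp [mul_assoc]
  · intro τ _; simp [← mul_assoc]


/-- For any two distinct values `k ≠ m` in `Fin 10`, the probability that the first
card drawn (position 0) has value `k` while the dealer's hole card (position `t-1`)
does not have value `m` equals `(count k) * (t − count m − 1) / (t * (t − 1))`. -/
theorem prob_first_eq_k_and_hole_ne_m
    (t : ℕ) (ht : 2 ≤ t) (v : Fin t → Fin 10) (k m : Fin 10) (hkm : k ≠ m) :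
    (PMF.uniformOfFintype (Equiv.Perm (Fin t))).toOuterMeasure
        {σ : Equiv.Perm (Fin t) |
          v (σ ⟨0, by omega⟩) = k ∧ v (σ ⟨t - 1, by omega⟩) ≠ m}
      = (((Finset.univ.filter (fun i => v i = k)).card : ℝ≥0∞)
          * ((t - (Finset.univ.filter (fun i => v i = m)).card - 1 : ℕ) : ℝ≥0∞))
        / ((t : ℝ≥0∞) * ((t - 1 : ℕ) : ℝ≥0∞)) := by
  classical
  set i0 : Fin t := ⟨0, by omega⟩
  set i1 : Fin t := ⟨t - 1, by omega⟩
  have h01 : i0 ≠ i1 := by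
    simp only [i0, i1, Fin.mk.injEq, Ne, Fin.mk.injEq]
    omega
  set ck := (Finset.univ.filter (fun i => v i = k)).card with hck
  set cm := (Finset.univ.filter (fun i => v i = m)).card with hcm
  set P : Perm (Fin t) → Prop := fun σ => v (σ i0) = k ∧ v (σ i1) ≠ m with hP
  -- fiberwise count
  set T : Finset (Fin t × Fin t) :=
    univ.filter (fun p => v p.1 = k ∧ v p.2 ≠ m ∧ p.1 ≠ p.2) with hT
  have hSc : (univ.filter P).card = T.card * (t - 2).factorial := by
    rw [Finset.card_eq_sum_card_fiberwise
      (f := fun σ : Perm (Fin t) => (σ i0, σ i1)) (t := T)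
      (fun σ hσ => by
        simp only [Finset.mem_coe, mem_filter, mem_univ, true_and, hP] at hσ
        simp only [Finset.mem_coe, hT, mem_filter, mem_univ, true_and]
        exact ⟨hσ.1, hσ.2, fun h => h01 (σ.injective h)⟩)]
    rw [Finset.sum_congr rfl (fun p hp => ?_), Finset.sum_const, smul_eq_mul]
    simp only [hT, mem_filter, mem_univ, true_and] at hp
    have : (univ.filter P).filter (fun σ : Perm (Fin t) => (σ i0, σ i1) = p)
        = univ.filter (fun σ : Perm (Fin t) => σ i0 = p.1 ∧ σ i1 = p.2) := by
      ext σ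
      simp only [mem_filter, mem_univ, true_and, hP, Prod.ext_iff]
      constructor
      · rintro ⟨_, h1, h2⟩; exact ⟨h1, h2⟩
      · rintro ⟨h1, h2⟩
        exact ⟨⟨h1 ▸ hp.1, h2 ▸ hp.2.1⟩, h1, h2⟩
    rw [this, two_point_card i0 i1 p.1 p.2 h01 hp.2.2, Fintype.card_fin]
  -- card of T
  have hTc : T.card = ck * (t - cm - 1) := by
    rw [Finset.card_eq_sum_card_fiberwise
      (f := Prod.fst) (t := univ.filter (fun a => v a = k))
      (fun p hp => by
        simp only [Finset.mem_coe, hT, mem_filter, mem_univ, true_and] at hp ⊢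
        exact hp.1)]
    rw [Finset.sum_congr rfl (fun a ha => ?_), Finset.sum_const, smul_eq_mul, hck]
    simp only [mem_filter, mem_univ, true_and] at ha
    have : T.filter (fun p => p.1 = a)
        = ({a} : Finset (Fin t)) ×ˢ ((univ.filter (fun b => v b ≠ m)).erase a) := by
      ext p
      simp only [hT, mem_filter, mem_univ, true_and, Finset.mem_product,
        Finset.mem_singleton, Finset.mem_erase]
      constructor
      · rintro ⟨⟨h1, h2, h3⟩, h4⟩
        exact ⟨h4, fun h => h3 (h4.trans h.symm), h2⟩
      · rintro ⟨h4, h3, h2⟩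
        exact ⟨⟨h4 ▸ ha, h2, fun h => h3 (h ▸ h4)⟩, h4⟩
    rw [this, Finset.card_product, Finset.card_singleton, one_mul]
    rw [Finset.card_erase_of_mem (by simp [ha, hkm])]
    congr 1
    rw [hcm, Finset.filter_not, Finset.card_sdiff_of_subset (Finset.filter_subset _ _),
      Finset.card_univ, Fintype.card_fin]
  -- assemble
  rw [PMF.toOuterMeasure_uniformOfFintype_apply]
  have hfac : t.factorial = (t * (t - 1)) * (t - 2).factorial := by
    obtain ⟨s, rfl⟩ : ∃ s, t = s + 2 := ⟨t - 2, by omega⟩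
    simp [Nat.factorial]
    ring
  rw [← Set.toFinset_card, Set.toFinset_setOf, hSc, hTc, Fintype.card_perm, Fintype.card_fin, hfac,
    Nat.cast_mul, Nat.cast_mul, Nat.cast_mul, Nat.cast_mul]
  exact ENNReal.mul_div_mul_right _ _
    (Nat.cast_ne_zero.mpr (Nat.factorial_ne_zero _)) (ENNReal.natCast_ne_top _)
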